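/- arXiv:1606.02660 — 2 statements merged into one kernel-verified Lean document; each statement's English description precedes it below -/
import Mathlib

section
/- Let p, q ≥ 1 and G a graph with n vertices and m edges. Then hom(G, S°(p,q)) ≤ hom(L(n,m), S°(p,q)), where L(n,m) is the lex graph. -/
/-- Number of homomorphisms from a simple graph `G` to a graph-with-loops given
by an adjacency relation `H`. -/
noncomputable def homCount {V W : Type*} (G : SimpleGraph V) (H : W → W → Prop) : ℕ :=
  Nat.card {f : V → W // ∀ a b, G.Adj a b → H (f a) (f b)}

/-- Number of independent sets of a simple graph (including the empty set). -/
noncomputable def indCount {V : Type*} (G : SimpleGraph V) : ℕ :=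
  Nat.card {s : Finset V // ∀ a ∈ s, ∀ b ∈ s, ¬ G.Adj a b}

/-- Number of edges of a simple graph. -/
noncomputable def edgeCount {V : Type*} (G : SimpleGraph V) : ℕ := Nat.card G.edgeSet

/-- The lex graph `L(n,m)`: edges are the first `m` pairs in lexicographic order. -/
def lexGraph (n m : ℕ) : SimpleGraph (Fin n) where
  Adj a b := a ≠ b ∧
    (min a.val b.val) * (n - 1) - (min a.val b.val) * ((min a.val b.val) - 1) / 2
      + (max a.val b.val - min a.val b.val - 1) < m
  symm := by
    constructor
    intro a b h
    obtain ⟨h1, h2⟩ := h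
    refine ⟨h1.symm, ?_⟩
    rwa [min_comm, max_comm]
  loopless := by constructor; intro a h; exact h.1 rfl

/-- Disjoint union of a graph with `r` isolated vertices. -/
def addIsolates {V : Type*} (G : SimpleGraph V) (r : ℕ) : SimpleGraph (V ⊕ Fin r) where
  Adj x y := ∃ a b, x = Sum.inl a ∧ y = Sum.inl b ∧ G.Adj a b
  symm := by constructor; rintro x y ⟨a, b, rfl, rfl, h⟩; exact ⟨b, a, rfl, rfl, h.symm⟩
  loopless := by
    constructor
    rintro x ⟨a, b, rfl, h1, h2⟩
    cases Sum.inl.inj h1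
    exact G.loopless.irrefl a h2

/-- The graph `J` (loop-threshold code 010): vertex 0 is isolated, vertex 1 is
unlooped and adjacent to vertex 2, which is looped. -/
def Jrel : Fin 3 → Fin 3 → Prop := fun x y =>
  (x = 1 ∧ y = 2) ∨ (x = 2 ∧ y = 1) ∨ (x = 2 ∧ y = 2)

open Classical in
/-- The independence polynomial of a graph. -/
noncomputable def indPoly {V : Type*} [Fintype V] (G : SimpleGraph V) (x : ℝ) : ℝ :=
  ∑ s ∈ Finset.univ.filter (fun s : Finset V => ∀ a ∈ s, ∀ b ∈ s, ¬ G.Adj a b), x ^ s.card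

open Finset Finset.Colex

def lexIdx (n i j : ℕ) : ℕ := i * (n - 1) - i * (i - 1) / 2 + (j - i - 1)



lemma c2_succ (a : ℕ) : (a + 1) * a / 2 = a * (a - 1) / 2 + a := by
  have h1 : (a + 1) * ((a+1) - 1) / 2 = (a+1).choose 2 := (Nat.choose_two_right _).symm
  have h2 : a * (a - 1) / 2 = a.choose 2 := (Nat.choose_two_right _).symm
  simp only [Nat.add_sub_cancel] at h1
  rw [h1, h2, Nat.choose_succ_succ, Nat.choose_one_right, Nat.add_comm]

lemma c2_le {a n : ℕ} (ha : a ≤ n - 1) : a * (a - 1) / 2 ≤ a * (n - 1) :=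
  le_trans (Nat.div_le_self _ _) (Nat.mul_le_mul_left _ (by omega))

/-- `hfun n a = a*(n-1) - C(a,2)` : the index of the first pair with min `a`. -/
def hfun (n a : ℕ) : ℕ := a * (n - 1) - a * (a - 1) / 2

lemma hfun_succ {n a : ℕ} (ha : a ≤ n - 1) :
    hfun n (a + 1) = hfun n a + (n - 1 - a) := by
  unfold hfun
  have h1 : (a + 1) * a / 2 = a * (a - 1) / 2 + a := c2_succ a
  have h2 : a * (a - 1) / 2 ≤ a * (n - 1) := c2_le ha
  have h3 : (a + 1) * (n - 1) = a * (n - 1) + (n - 1) := by ring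
  simp only [Nat.add_sub_cancel, h1, h3]
  omega

lemma hfun_mono {n a b : ℕ} (hab : a ≤ b) (hb : b ≤ n - 1) : hfun n a ≤ hfun n b := by
  induction b with
  | zero =>
    have : a = 0 := by omega
    subst this; exact le_rfl
  | succ b ih =>
    rcases Nat.lt_or_ge a (b+1) with h | h
    · have : hfun n a ≤ hfun n b := ih (by omega) (by omega)
      rw [hfun_succ (by omega)]; omega
    · have : a = b + 1 := by omega
      subst this; rfl

lemma lexIdx_lt {n i j i' j' : ℕ} (hij : i < j) (hj : j < n) (hij' : i' < j') (hj' : j' < n)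
    (h : i' < i ∨ (i' = i ∧ j' < j)) : lexIdx n i' j' < lexIdx n i j := by
  have hIi : lexIdx n i j = hfun n i + (j - i - 1) := rfl
  have hIi' : lexIdx n i' j' = hfun n i' + (j' - i' - 1) := rfl
  rcases h with h | ⟨rfl, h⟩
  · have h1 : hfun n (i' + 1) = hfun n i' + (n - 1 - i') := hfun_succ (by omega)
    have h2 : hfun n (i' + 1) ≤ hfun n i := hfun_mono (by omega) (by omega)
    omega
  · omega


lemma colex_compl_le {α : Type*} [LinearOrder α] [Fintype α] [DecidableEq α] {s t : Finset α}
    (h : toColex s ≤ toColex t) : toColex tᶜ ≤ toColex sᶜ := by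
  rw [Finset.Colex.toColex_le_toColex] at h ⊢
  intro a ha hna
  rw [Finset.mem_compl] at ha
  rw [Finset.mem_compl, not_not] at hna
  obtain ⟨b, hbt, hbs, hab⟩ := h hna ha
  exact ⟨b, Finset.mem_compl.2 hbs, fun hb => (Finset.mem_compl.1 hb) hbt, hab⟩

lemma colex_compl_lt {α : Type*} [LinearOrder α] [Fintype α] [DecidableEq α] {s t : Finset α}
    (h : toColex sᶜ < toColex tᶜ) : toColex t < toColex s := by
  by_contra hc
  rw [not_lt] at hc
  exact absurd (colex_compl_le hc) (not_le.2 h)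

/-- Colex comparison of pairs, `≤` version. -/
lemma pair_colex_le {α : Type*} [LinearOrder α] [DecidableEq α] {c d c' d' : α} (h1 : c < d) (h2 : c' < d')
    (h : d < d' ∨ (d = d' ∧ c ≤ c')) : toColex ({c, d} : Finset α) ≤ toColex {c', d'} := by
  rw [Finset.Colex.toColex_le_toColex]
  intro a ha hna
  simp only [Finset.mem_insert, Finset.mem_singleton] at ha hna ⊢
  push_neg at hna
  rcases h with h | ⟨rfl, hcc⟩
  · refine ⟨d', Or.inr rfl, ?_, ?_⟩
    · rintro (rfl | rfl)
      · exact lt_asymm h h1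
      · exact lt_irrefl _ h
    · rcases ha with rfl | rfl
      · exact le_of_lt (h1.trans h)
      · exact le_of_lt h
  · have hac : a = c := by
      rcases ha with rfl | rfl
      · rfl
      · exact absurd rfl hna.2
    subst hac
    refine ⟨c', Or.inl rfl, fun hb => ?_, hcc⟩
    rcases hb with hb | hb
    · exact hna.1 hb.symm
    · exact lt_irrefl _ (hb ▸ h2)

lemma pair_colex_lt {α : Type*} [LinearOrder α] [DecidableEq α] {c d c' d' : α} (h1 : c < d) (h2 : c' < d')
    (h : toColex ({c', d'} : Finset α) < toColex {c, d}) :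
    d' < d ∨ (d' = d ∧ c' < c) := by
  by_contra hc
  push_neg at hc
  refine absurd (pair_colex_le h1 h2 ?_) (not_le.2 h)
  rcases lt_or_eq_of_le hc.1 with hdd | rfl
  · exact Or.inl hdd
  · exact Or.inr ⟨rfl, hc.2 rfl⟩

namespace CRproof
variable {n : ℕ}

/-- complement of the image under `Fin.rev`. -/
def Phi (s : Finset (Fin n)) : Finset (Fin n) := (s.image Fin.rev)ᶜ

lemma image_rev_compl (s : Finset (Fin n)) : (sᶜ.image Fin.rev) = (s.image Fin.rev)ᶜ := by
  ext x
  simp only [mem_image, mem_compl]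
  constructor
  · rintro ⟨y, hy, rfl⟩ ⟨z, hz, hzy⟩
    exact hy ((Fin.rev_injective hzy) ▸ hz)
  · intro hx
    refine ⟨x.rev, fun hxr => hx ⟨x.rev, hxr, Fin.rev_rev x⟩, Fin.rev_rev x⟩

lemma Phi_Phi (s : Finset (Fin n)) : Phi (Phi s) = s := by
  unfold Phi
  rw [← image_rev_compl, compl_compl, Finset.image_image]
  simp only [Function.comp_def, Fin.rev_rev]
  exact Finset.image_id

lemma Phi_injective : Function.Injective (Phi (n := n)) := by
  intro s t h
  have := congrArg Phi h
  rwa [Phi_Phi, Phi_Phi] at this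

lemma Phi_card (s : Finset (Fin n)) : #(Phi s) = n - #s := by
  unfold Phi
  rw [Finset.card_compl, Finset.card_image_of_injective _ Fin.rev_injective, Fintype.card_fin]

lemma Phi_subset {s t : Finset (Fin n)} (h : s ⊆ t) : Phi t ⊆ Phi s := by
  unfold Phi
  exact Finset.compl_subset_compl.2 (Finset.image_subset_image h)

lemma Phi_subset' {s t : Finset (Fin n)} (h : Phi t ⊆ Phi s) : s ⊆ t := by
  have := Phi_subset h
  rwa [Phi_Phi, Phi_Phi] at this

lemma Phi_pair {a b : Fin n} : Phi ({a, b} : Finset (Fin n)) = ({a.rev, b.rev} : Finset (Fin n))ᶜ := by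
  unfold Phi
  rw [Finset.image_insert, Finset.image_singleton]

/-- The set of edges of `G`, as two-element finsets. -/
noncomputable def edgeFam (G : SimpleGraph (Fin n)) : Finset (Finset (Fin n)) :=
  @Finset.filter _ (fun s => ∃ a b : Fin n, a < b ∧ G.Adj a b ∧ s = {a, b})
    (Classical.decPred _) univ

lemma mem_edgeFam {G : SimpleGraph (Fin n)} {s : Finset (Fin n)} :
    s ∈ edgeFam G ↔ ∃ a b : Fin n, a < b ∧ G.Adj a b ∧ s = {a, b} := by
  letI := Classical.decPred (fun s : Finset (Fin n) => ∃ a b : Fin n, a < b ∧ G.Adj a b ∧ s = {a, b})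
  rw [edgeFam, Finset.mem_filter]
  simp only [Finset.mem_univ, true_and]

lemma edgeFam_card_two {G : SimpleGraph (Fin n)} {s : Finset (Fin n)} (h : s ∈ edgeFam G) :
    s.card = 2 := by
  obtain ⟨a, b, hab, -, rfl⟩ := mem_edgeFam.1 h
  exact Finset.card_pair (ne_of_lt hab)

lemma edgeCount_le_edgeFam (G : SimpleGraph (Fin n)) : edgeCount G ≤ #(edgeFam G) := by
  classical
  have : edgeCount G = Nat.card G.edgeSet := rfl
  rw [this]
  have hcard : #(edgeFam G) = Nat.card {s // s ∈ edgeFam G} := by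
    rw [Nat.card_eq_fintype_card, Fintype.card_coe]
  rw [hcard]
  refine Nat.card_le_card_of_injective
    (fun e => (⟨Sym2.lift ⟨fun a b => ({a, b} : Finset (Fin n)), fun a b => Finset.pair_comm a b⟩ e.1, ?_⟩ :
      {s // s ∈ edgeFam G})) ?_
  · obtain ⟨e, he⟩ := e
    induction e with
    | _ a b =>
      rw [SimpleGraph.mem_edgeSet] at he
      rw [Sym2.lift_mk]
      rcases lt_or_gt_of_ne he.ne with h | h
      · exact mem_edgeFam.2 ⟨a, b, h, he, rfl⟩
      · exact mem_edgeFam.2 ⟨b, a, h, he.symm, Finset.pair_comm a b⟩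
  · rintro ⟨e₁, he₁⟩ ⟨e₂, he₂⟩ h
    simp only [Subtype.mk.injEq] at h ⊢
    induction e₁ with
    | _ a b =>
      induction e₂ with
      | _ c d =>
        rw [Sym2.lift_mk, Sym2.lift_mk] at h
        rw [SimpleGraph.mem_edgeSet] at he₁
        have h' : ({a, b} : Finset (Fin n)) = {c, d} := h
        have ha : a ∈ ({c, d} : Finset (Fin n)) := h' ▸ (Finset.mem_insert_self a {b})
        have hb : b ∈ ({c, d} : Finset (Fin n)) := h' ▸ (Finset.mem_insert.2 (Or.inr (Finset.mem_singleton_self b)))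
        simp only [Finset.mem_insert, Finset.mem_singleton] at ha hb
        rw [Sym2.eq_iff]
        rcases ha with rfl | rfl
        · left
          refine ⟨rfl, ?_⟩
          rcases hb with rfl | rfl
          · exact absurd rfl he₁.ne
          · rfl
        · right
          refine ⟨rfl, ?_⟩
          rcases hb with rfl | rfl
          · rfl
          · exact absurd rfl he₁.ne

/-- membership in `edgeFam (lexGraph n m)`. -/
lemma mem_edgeFam_lex {m : ℕ} {s : Finset (Fin n)} :
    s ∈ edgeFam (lexGraph n m) ↔
      ∃ a b : Fin n, a < b ∧ lexIdx n a.val b.val < m ∧ s = {a, b} := by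
  rw [mem_edgeFam]
  constructor
  · rintro ⟨a, b, hab, ⟨-, hidx⟩, rfl⟩
    refine ⟨a, b, hab, ?_, rfl⟩
    have h1 : min a.val b.val = a.val := min_eq_left (le_of_lt hab)
    have h2 : max a.val b.val = b.val := max_eq_right (le_of_lt hab)
    rwa [h1, h2] at hidx
  · rintro ⟨a, b, hab, hidx, rfl⟩
    refine ⟨a, b, hab, ⟨ne_of_lt hab, ?_⟩, rfl⟩
    have h1 : min a.val b.val = a.val := min_eq_left (le_of_lt hab)
    have h2 : max a.val b.val = b.val := max_eq_right (le_of_lt hab)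
    rw [h1, h2]; exact hidx

end CRproof

namespace CRproof
variable {n m : ℕ}

lemma pair_min' {a b : Fin n} (h : a < b) :
    ({a, b} : Finset (Fin n)).min' ⟨a, by simp⟩ = a := by
  apply le_antisymm
  · exact Finset.min'_le _ _ (by simp)
  · apply Finset.le_min'
    intro y hy
    rcases Finset.mem_insert.1 hy with rfl | hy
    · exact le_rfl
    · rw [Finset.mem_singleton] at hy; subst hy; exact le_of_lt h

lemma pair_max' {a b : Fin n} (h : a < b) :
    ({a, b} : Finset (Fin n)).max' ⟨a, by simp⟩ = b := by
  apply le_antisymm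
  · apply Finset.max'_le
    intro y hy
    rcases Finset.mem_insert.1 hy with rfl | hy
    · exact le_of_lt h
    · rw [Finset.mem_singleton] at hy; subst hy; exact le_rfl
  · exact Finset.le_max' _ _ (by simp)

lemma card_edgeFam_lex_le : #(edgeFam (lexGraph n m)) ≤ m := by
  classical
  have hle := Finset.card_le_card_of_injOn
    (f := fun s : Finset (Fin n) => if h : s.Nonempty then lexIdx n (s.min' h).val (s.max' h).val else 0)
    (s := edgeFam (lexGraph n m)) (t := Finset.range m) ?_ ?_
  · simpa using hle
  · intro s hs
    obtain ⟨a, b, hab, hidx, rfl⟩ := mem_edgeFam_lex.1 hs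
    have hne : ({a, b} : Finset (Fin n)).Nonempty := ⟨a, by simp⟩
    simp only
    rw [dif_pos hne, Finset.mem_coe, Finset.mem_range]
    rw [pair_min' hab, pair_max' hab]
    exact hidx
  · intro s hs t ht hst
    obtain ⟨a, b, hab, hia, rfl⟩ := mem_edgeFam_lex.1 hs
    obtain ⟨c, d, hcd, hic, rfl⟩ := mem_edgeFam_lex.1 ht
    have hne1 : ({a, b} : Finset (Fin n)).Nonempty := ⟨a, by simp⟩
    have hne2 : ({c, d} : Finset (Fin n)).Nonempty := ⟨c, by simp⟩
    simp only at hst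
    rw [dif_pos hne1, dif_pos hne2, pair_min' hab, pair_max' hab, pair_min' hcd,
      pair_max' hcd] at hst
    have hac : a = c ∧ b = d := by
      by_contra hcon
      have hne : ¬(a.val = c.val ∧ b.val = d.val) := by
        intro ⟨h1, h2⟩
        exact hcon ⟨Fin.ext h1, Fin.ext h2⟩
      have h1 : a.val < b.val := hab
      have h2 : c.val < d.val := hcd
      rcases Nat.lt_trichotomy a.val c.val with h | h | h
      · have := lexIdx_lt h2 d.isLt h1 b.isLt (Or.inl h)
        omega
      · rcases Nat.lt_trichotomy b.val d.val with h' | h' | h'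
        · have := lexIdx_lt h2 d.isLt h1 b.isLt (Or.inr ⟨h, h'⟩)
          omega
        · exact hne ⟨h, h'⟩
        · have := lexIdx_lt h1 b.isLt h2 d.isLt (Or.inr ⟨h.symm, h'⟩)
          omega
      · have := lexIdx_lt h1 b.isLt h2 d.isLt (Or.inl h)
        omega
    rw [hac.1, hac.2]

lemma sized_image_Phi (G : SimpleGraph (Fin n)) :
    ((((edgeFam G).image Phi) : Finset (Finset (Fin n))) : Set (Finset (Fin n))).Sized (n - 2) := by
  intro s hs
  rw [Finset.coe_image] at hs
  obtain ⟨e, he, rfl⟩ := hs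
  rw [Phi_card, edgeFam_card_two he]

lemma isInitSeg_image_Phi_lex :
    Finset.Colex.IsInitSeg ((edgeFam (lexGraph n m)).image Phi) (n - 2) := by
  constructor
  · exact sized_image_Phi _
  · rintro s t hs ⟨hlt, hcard⟩
    rw [Finset.mem_image] at hs
    obtain ⟨e, he, rfl⟩ := hs
    obtain ⟨a, b, hab, hidx, rfl⟩ := mem_edgeFam_lex.1 he
    have hn2 : 2 ≤ n := by
      have := b.isLt
      have : a.val < b.val := hab
      omega
    -- the preimage of t
    have htcard : #(Phi t) = 2 := by
      rw [Phi_card, hcard]; omega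
    obtain ⟨x, y, hxy, hPhit⟩ := Finset.card_eq_two.1 htcard
    -- order the two elements
    obtain ⟨a', b', ha'b', hPt⟩ : ∃ a' b' : Fin n, a' < b' ∧ Phi t = {a', b'} := by
      rcases lt_or_gt_of_ne hxy with h | h
      · exact ⟨x, y, h, hPhit⟩
      · exact ⟨y, x, h, hPhit ▸ Finset.pair_comm x y⟩
    have htPhi : t = Phi {a', b'} := by rw [← hPt, Phi_Phi]
    -- transfer colex
    rw [htPhi, Phi_pair, Phi_pair] at hlt
    have hrev := colex_compl_lt hlt
    rw [Finset.pair_comm a.rev b.rev, Finset.pair_comm a'.rev b'.rev] at hrev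
    have hkey := pair_colex_lt (Fin.rev_lt_rev.2 ha'b') (Fin.rev_lt_rev.2 hab) hrev
    have hdisj : a'.val < a.val ∨ (a'.val = a.val ∧ b'.val < b.val) := by
      rcases hkey with h | ⟨h1, h2⟩
      · exact Or.inl (Fin.rev_lt_rev.1 h)
      · refine Or.inr ⟨?_, Fin.rev_lt_rev.1 h2⟩
        have : a' = a := Fin.rev_injective h1.symm
        rw [this]
    have hidx' : lexIdx n a'.val b'.val < m :=
      lt_trans (lexIdx_lt hab b.isLt ha'b' b'.isLt hdisj) hidx
    rw [Finset.mem_image]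
    refine ⟨{a', b'}, mem_edgeFam_lex.2 ⟨a', b', ha'b', hidx', rfl⟩, htPhi.symm⟩

end CRproof

namespace CRproof
variable {n m : ℕ}

/-- The independent-set family of `G`. -/
noncomputable def indFam (G : SimpleGraph (Fin n)) : Finset (Finset (Fin n)) :=
  @Finset.filter _ (fun s => ∀ a ∈ s, ∀ b ∈ s, ¬ G.Adj a b) (Classical.decPred _) univ

lemma mem_indFam {G : SimpleGraph (Fin n)} {s : Finset (Fin n)} :
    s ∈ indFam G ↔ ∀ a ∈ s, ∀ b ∈ s, ¬ G.Adj a b := by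
  letI := Classical.decPred (fun s : Finset (Fin n) => ∀ a ∈ s, ∀ b ∈ s, ¬ G.Adj a b)
  rw [indFam, Finset.mem_filter]
  simp only [Finset.mem_univ, true_and]

/-- the family of `k`-sets containing an edge. -/
noncomputable def badFam (G : SimpleGraph (Fin n)) (k : ℕ) : Finset (Finset (Fin n)) :=
  @Finset.filter _ (fun t => ∃ e ∈ edgeFam G, e ⊆ t) (Classical.decPred _)
    (Finset.powersetCard k univ)

lemma mem_badFam {G : SimpleGraph (Fin n)} {k : ℕ} {t : Finset (Fin n)} :
    t ∈ badFam G k ↔ #t = k ∧ ∃ e ∈ edgeFam G, e ⊆ t := by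
  letI := Classical.decPred (fun t : Finset (Fin n) => ∃ e ∈ edgeFam G, e ⊆ t)
  rw [badFam, Finset.mem_filter, Finset.mem_powersetCard_univ]

lemma not_indep_iff {G : SimpleGraph (Fin n)} {t : Finset (Fin n)} :
    ¬ (∀ a ∈ t, ∀ b ∈ t, ¬ G.Adj a b) ↔ ∃ e ∈ edgeFam G, e ⊆ t := by
  constructor
  · intro h
    push_neg at h
    obtain ⟨a, ha, b, hb, hadj⟩ := h
    rcases lt_or_gt_of_ne hadj.ne with hlt | hlt
    · exact ⟨{a, b}, mem_edgeFam.2 ⟨a, b, hlt, hadj, rfl⟩, Finset.insert_subset ha (by simpa)⟩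
    · exact ⟨{b, a}, mem_edgeFam.2 ⟨b, a, hlt, hadj.symm, rfl⟩, Finset.insert_subset hb (by simpa)⟩
  · rintro ⟨e, he, het⟩ hind
    obtain ⟨a, b, hab, hadj, rfl⟩ := mem_edgeFam.1 he
    exact hind a (het (by simp)) b (het (by simp)) hadj

lemma indFam_filter_eq (G : SimpleGraph (Fin n)) (k : ℕ) :
    @Finset.filter _ (fun s => #s = k) (Classical.decPred _) (indFam G)
      = Finset.powersetCard k univ \ badFam G k := by
  letI := Classical.decPred (fun s : Finset (Fin n) => #s = k)
  ext t
  rw [Finset.mem_filter, Finset.mem_sdiff, mem_indFam, mem_badFam,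
    Finset.mem_powersetCard_univ]
  constructor
  · rintro ⟨hind, hk⟩
    exact ⟨hk, fun hbad => (not_indep_iff.2 hbad.2) hind⟩
  · rintro ⟨hk, hbad⟩
    refine ⟨?_, hk⟩
    by_contra hind
    exact hbad ⟨hk, not_indep_iff.1 hind⟩

lemma badFam_card_eq_shadow (G : SimpleGraph (Fin n)) {k : ℕ} (h2 : 2 ≤ k) (hkn : k ≤ n) :
    #(badFam G k) = #(Finset.shadow^[k - 2] ((edgeFam G).image Phi)) := by
  classical
  apply Finset.card_bij (fun t _ => Phi t)
  · intro t ht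
    obtain ⟨htk, e, he, het⟩ := mem_badFam.1 ht
    rw [Finset.mem_shadow_iterate_iff_exists_sdiff]
    refine ⟨Phi e, Finset.mem_image_of_mem _ he, Phi_subset het, ?_⟩
    rw [Finset.card_sdiff_of_subset (Phi_subset het), Phi_card, Phi_card, htk, edgeFam_card_two he]
    omega
  · intro t₁ h₁ t₂ h₂ h
    exact Phi_injective h
  · intro u hu
    rw [Finset.mem_shadow_iterate_iff_exists_sdiff] at hu
    obtain ⟨s, hs, hus, hcard⟩ := hu
    obtain ⟨e, he, rfl⟩ := Finset.mem_image.1 hs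
    refine ⟨Phi u, ?_, Phi_Phi u⟩
    have hPe : #(Phi e) = n - 2 := by rw [Phi_card, edgeFam_card_two he]
    have hucard : #u = n - k := by
      rw [Finset.card_sdiff_of_subset hus] at hcard
      have := Finset.card_le_card hus
      omega
    rw [mem_badFam]
    refine ⟨?_, e, he, ?_⟩
    · rw [Phi_card, hucard]; omega
    · have := Phi_subset hus
      rwa [Phi_Phi] at this

lemma badFam_card_le (G : SimpleGraph (Fin n)) (hm : m ≤ #(edgeFam G)) (k : ℕ) :
    #(badFam (lexGraph n m) k) ≤ #(badFam G k) := by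
  classical
  rcases Nat.lt_or_ge k 2 with hk2 | hk2
  · have : badFam (lexGraph n m) k = ∅ := by
      rw [Finset.eq_empty_iff_forall_notMem]
      intro t ht
      obtain ⟨htk, e, he, het⟩ := mem_badFam.1 ht
      have := Finset.card_le_card het
      rw [edgeFam_card_two he, htk] at this
      omega
    simp [this]
  rcases Nat.lt_or_ge n k with hnk | hnk
  · have : badFam (lexGraph n m) k = ∅ := by
      rw [Finset.eq_empty_iff_forall_notMem]
      intro t ht
      obtain ⟨htk, -⟩ := mem_badFam.1 ht
      have := Finset.card_le_univ t
      rw [htk] at this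
      simp only [Finset.card_univ, Fintype.card_fin] at this
      omega
    simp [this]
  rw [badFam_card_eq_shadow _ hk2 hnk, badFam_card_eq_shadow _ hk2 hnk]
  have hle : #((edgeFam (lexGraph n m)).image Phi) ≤ #((edgeFam G).image Phi) := by
    rw [Finset.card_image_of_injective _ Phi_injective,
      Finset.card_image_of_injective _ Phi_injective]
    exact le_trans card_edgeFam_lex_le hm
  have hKK := Finset.iterated_kk (k := k - 2) (sized_image_Phi G) hle isInitSeg_image_Phi_lex
  convert hKK using 2 <;> congr!

lemma indFam_filter_card_le (G : SimpleGraph (Fin n)) (hm : m ≤ #(edgeFam G)) (k : ℕ) :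
    #(@Finset.filter _ (fun s => #s = k) (Classical.decPred _) (indFam G))
      ≤ #(@Finset.filter _ (fun s => #s = k) (Classical.decPred _) (indFam (lexGraph n m))) := by
  rw [indFam_filter_eq, indFam_filter_eq]
  have hsub1 : badFam G k ⊆ Finset.powersetCard k univ := by
    intro t ht
    rw [Finset.mem_powersetCard_univ]
    exact (mem_badFam.1 ht).1
  have hsub2 : badFam (lexGraph n m) k ⊆ Finset.powersetCard k univ := by
    intro t ht
    rw [Finset.mem_powersetCard_univ]
    exact (mem_badFam.1 ht).1
  rw [Finset.card_sdiff_of_subset hsub1, Finset.card_sdiff_of_subset hsub2]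
  exact Nat.sub_le_sub_left (badFam_card_le G hm k) _

end CRproof

namespace CRproof
variable {n m : ℕ}

lemma card_low (p q : ℕ) :
    #((univ : Finset (Fin (p + q))).filter (fun x => x.val < p)) = p := by
  classical
  have himg : ((univ : Finset (Fin (p + q))).filter (fun x => x.val < p)).image Fin.val
      = Finset.range p := by
    ext x
    simp only [Finset.mem_image, Finset.mem_filter, Finset.mem_univ, true_and, Finset.mem_range]
    constructor
    · rintro ⟨y, hy, rfl⟩; exact hy
    · intro hx; exact ⟨⟨x, by omega⟩, hx, rfl⟩
  have := congrArg Finset.card himg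
  rwa [Finset.card_image_of_injective _ Fin.val_injective, Finset.card_range] at this

lemma card_high (p q : ℕ) :
    #((univ : Finset (Fin (p + q))).filter (fun x => p ≤ x.val)) = q := by
  classical
  have himg : ((univ : Finset (Fin (p + q))).filter (fun x => p ≤ x.val)).image Fin.val
      = Finset.Ico p (p + q) := by
    ext x
    simp only [Finset.mem_image, Finset.mem_filter, Finset.mem_univ, true_and, Finset.mem_Ico]
    constructor
    · rintro ⟨y, hy, rfl⟩; exact ⟨hy, y.isLt⟩
    · rintro ⟨h1, h2⟩; exact ⟨⟨x, h2⟩, h1, rfl⟩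
  have := congrArg Finset.card himg
  rw [Finset.card_image_of_injective _ Fin.val_injective, Nat.card_Ico] at this
  omega

lemma homCount_eq (G : SimpleGraph (Fin n)) (p q : ℕ) :
    homCount G (fun x y : Fin (p + q) => x.val < p ∨ y.val < p)
      = ∑ s ∈ indFam G, p ^ (n - #s) * q ^ #s := by
  classical
  rw [homCount, Nat.card_eq_fintype_card, Fintype.card_subtype]
  set key : (Fin n → Fin (p + q)) → Finset (Fin n) :=
    fun f => univ.filter (fun v => p ≤ (f v).val) with hkey
  have hmaps : ∀ f ∈ (univ : Finset (Fin n → Fin (p + q))).filter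
      (fun f => ∀ a b, G.Adj a b → ((f a).val < p ∨ (f b).val < p)), key f ∈ indFam G := by
    intro f hf
    rw [Finset.mem_filter] at hf
    rw [mem_indFam]
    intro a ha b hb hadj
    rw [hkey] at ha hb
    simp only [Finset.mem_filter, Finset.mem_univ, true_and] at ha hb
    rcases hf.2 a b hadj with h | h <;> omega
  rw [Finset.card_eq_sum_card_fiberwise hmaps]
  apply Finset.sum_congr rfl
  intro s hs
  have hind := mem_indFam.1 hs
  have hfilter : ((univ : Finset (Fin n → Fin (p + q))).filter
        (fun f => ∀ a b, G.Adj a b → ((f a).val < p ∨ (f b).val < p))).filter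
      (fun f => key f = s)
      = Fintype.piFinset (fun v : Fin n => if v ∈ s
          then (univ : Finset (Fin (p + q))).filter (fun x => p ≤ x.val)
          else (univ : Finset (Fin (p + q))).filter (fun x => x.val < p)) := by
    ext f
    rw [Finset.filter_filter, Finset.mem_filter, Fintype.mem_piFinset]
    have hkeyf : key f = s ↔ ∀ v : Fin n, (p ≤ (f v).val ↔ v ∈ s) := by
      rw [hkey, Finset.ext_iff]
      apply forall_congr'
      intro v
      simp [Finset.mem_filter]
    constructor
    · rintro ⟨-, -, hks⟩
      rw [hkeyf] at hks
      intro v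
      by_cases hv : v ∈ s <;> simp only [hv, if_true, if_false, Finset.mem_filter,
        Finset.mem_univ, true_and]
      · exact (hks v).2 hv
      · exact not_le.mp (fun hle => hv ((hks v).1 hle))
    · intro h
      have hks : key f = s := by
        rw [hkeyf]
        intro v
        have := h v
        by_cases hv : v ∈ s <;> simp only [hv, if_true, if_false, Finset.mem_filter,
          Finset.mem_univ, true_and] at this <;> constructor <;> intro <;> first | omega | assumption | tauto
      refine ⟨Finset.mem_univ f, ?_, hks⟩
      intro a b hadj
      by_contra hcon
      push_neg at hcon
      have ha : a ∈ key f := by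
        rw [hkey]; simp only [Finset.mem_filter, Finset.mem_univ, true_and]; omega
      have hb : b ∈ key f := by
        rw [hkey]; simp only [Finset.mem_filter, Finset.mem_univ, true_and]; omega
      rw [hks] at ha hb
      exact hind a ha b hb hadj
  rw [hfilter, Fintype.card_piFinset]
  have hprod : ∀ v : Fin n, #(if v ∈ s
        then (univ : Finset (Fin (p + q))).filter (fun x => p ≤ x.val)
        else (univ : Finset (Fin (p + q))).filter (fun x => x.val < p))
      = if v ∈ s then q else p := by
    intro v
    by_cases hv : v ∈ s <;> simp [hv, card_high, card_low]
  rw [Finset.prod_congr rfl (fun v _ => hprod v), Finset.prod_ite]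
  simp only [Finset.prod_const]
  have h1 : (univ : Finset (Fin n)).filter (fun v => v ∈ s) = s := by
    ext v; simp
  have h2 : #((univ : Finset (Fin n)).filter (fun v => ¬ v ∈ s)) = n - #s := by
    have : (univ : Finset (Fin n)).filter (fun v => ¬ v ∈ s) = sᶜ := by
      ext v; simp
    rw [this, Finset.card_compl, Fintype.card_fin]
  rw [h1, h2, mul_comm]

end CRproof

/-- For `p, q ≥ 1`, homomorphisms into the clique-looped split graph `S°(p,q)`
are maximized by the lex graph among graphs with `n` vertices and `m` edges. -/
theorem homCount_loopedSplit_le_lex (n m p q : ℕ) (hp : 1 ≤ p) (hq : 1 ≤ q)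
    (G : SimpleGraph (Fin n)) (hm : edgeCount G = m) :
    homCount G (fun x y : Fin (p + q) => x.val < p ∨ y.val < p)
      ≤ homCount (lexGraph n m) (fun x y : Fin (p + q) => x.val < p ∨ y.val < p) := by
  classical
  have hmE : m ≤ #(CRproof.edgeFam G) := hm ▸ CRproof.edgeCount_le_edgeFam G
  rw [CRproof.homCount_eq G p q, CRproof.homCount_eq (lexGraph n m) p q]
  have hgroup : ∀ H : SimpleGraph (Fin n),
      ∑ s ∈ CRproof.indFam H, p ^ (n - #s) * q ^ #s
        = ∑ k ∈ Finset.range (n + 1),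
            #(Finset.filter (fun s => #s = k) (CRproof.indFam H)) * (p ^ (n - k) * q ^ k) := by
    intro H
    rw [← Finset.sum_fiberwise_of_maps_to (g := fun s : Finset (Fin n) => #s)
      (t := Finset.range (n + 1)) (fun s _ => Finset.mem_range.2 (by
        show #s < n + 1
        have := Finset.card_le_univ s
        simp only [Finset.card_univ, Fintype.card_fin] at this
        omega))]
    apply Finset.sum_congr rfl
    intro k _
    have hconst : ∀ s ∈ Finset.filter (fun s : Finset (Fin n) => #s = k) (CRproof.indFam H),
        p ^ (n - #s) * q ^ #s = p ^ (n - k) * q ^ k := by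
      intro s hs
      rw [(Finset.mem_filter.1 hs).2]
    rw [Finset.sum_congr rfl hconst, Finset.sum_const, smul_eq_mul]
  rw [hgroup G, hgroup (lexGraph n m)]
  apply Finset.sum_le_sum
  intro k _
  have hcle := CRproof.indFam_filter_card_le G hmE k
  have e1 : (@Finset.filter _ (fun s : Finset (Fin n) => #s = k) (Classical.decPred _)
      (CRproof.indFam G)) = Finset.filter (fun s => #s = k) (CRproof.indFam G) :=
    Finset.filter_congr_decidable _ _ _
  have e2 : (@Finset.filter _ (fun s : Finset (Fin n) => #s = k) (Classical.decPred _)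
      (CRproof.indFam (lexGraph n m))) = Finset.filter (fun s => #s = k)
        (CRproof.indFam (lexGraph n m)) :=
    Finset.filter_congr_decidable _ _ _
  rw [e1, e2] at hcle
  exact Nat.mul_le_mul_right _ hcle
end

section
/- For every positive integer m, ℓ(m) ≤ (5 + √(9+24m))/2, where ℓ(m) is the maximum q such that the graph L(q,m) ∪ E_{m+1-q} maximizes hom(·,J) among graphs on m+1 vertices with m edges. -/
namespace EllAux

/-- `T n j = ∑_{i<j} (n-1-i)`: number of lex-pairs with smaller coordinate `< j`. -/
def T (n j : ℕ) : ℕ := ∑ i ∈ Finset.range j, (n - 1 - i)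

lemma T_zero (n : ℕ) : T n 0 = 0 := rfl

lemma T_succ (n j : ℕ) : T n (j+1) = T n j + (n - 1 - j) := Finset.sum_range_succ _ j

lemma T_mono (n : ℕ) {j j' : ℕ} (h : j ≤ j') : T n j ≤ T n j' := by
  induction j' with
  | zero =>
    obtain rfl : j = 0 := by omega
    exact le_refl _
  | succ j'' ih =>
    rcases Nat.eq_or_lt_of_le h with rfl | h'
    · exact le_refl _
    · exact le_trans (ih (Nat.lt_succ_iff.mp h')) (by rw [T_succ]; omega)

lemma two_T (n j : ℕ) (h : j ≤ n) : 2 * T n j + j * j + j = 2 * (j * n) := by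
  induction j with
  | zero => simp [T_zero]
  | succ i ih =>
    have hi := ih (by omega)
    rw [T_succ]
    have h1 : (i+1) * (i+1) = i * i + 2 * i + 1 := by ring
    have h2 : (i+1) * n = i * n + n := by ring
    omega

lemma T_shift (n j : ℕ) (h : j + 1 ≤ n) : T (n + 2) j = T n j + 2 * j := by
  induction j with
  | zero => simp [T_zero]
  | succ i ih =>
    have := ih (by omega)
    rw [T_succ, T_succ, this]
    omega

/-- the closed form appearing in `lexGraph` equals `T`. -/
lemma lexIdx_eq_T (n a : ℕ) (hn : 1 ≤ n) (ha : a ≤ n) :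
    a * (n-1) - a * (a-1) / 2 = T n a := by
  have hev : 2 * (a * (a-1) / 2) = a * (a-1) := by
    rcases Nat.even_mul_pred_self a with ⟨c, hc⟩
    omega
  have hC : a * (a-1) + a = a * a := by
    cases a with
    | zero => simp
    | succ i => rw [Nat.succ_sub_one]; ring
  have hA : a * (n-1) + a = a * n := by
    cases n with
    | zero => omega
    | succ i => rw [Nat.succ_sub_one]; ring
  have h2T := two_T n a ha
  have hle : a * (a-1) ≤ a * (n-1) := Nat.mul_le_mul_left _ (by omega)
  omega


end EllAux

section P2
open EllAux
variable {n m k w : ℕ}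

lemma lex_key (hk1 : 1 ≤ k) (hkw : k + w + 2 ≤ n) (hm : m = EllAux.T n k + w)
    (lo hi : ℕ) (hlo : lo < hi) (hhi : hi < n) :
    lo * (n-1) - lo * (lo-1) / 2 + (hi - lo - 1) < m ↔
      (lo < k ∨ (lo = k ∧ hi ≤ k + w)) := by
  have hn : 1 ≤ n := by omega
  rw [lexIdx_eq_T n lo hn (by omega)]
  have hT3 : T n (k+1) = T n k + (n-1-k) := T_succ n k
  rcases lt_trichotomy lo k with h | h | h
  · have h1 : T n (lo+1) = T n lo + (n-1-lo) := T_succ n lo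
    have h2 : T n (lo+1) ≤ T n k := T_mono n (by omega)
    omega
  · subst h
    omega
  · have h2 : T n (k+1) ≤ T n lo := T_mono n (by omega)
    omega

lemma lex_adj_iff (hk1 : 1 ≤ k) (hkw : k + w + 2 ≤ n) (hm : m = EllAux.T n k + w)
    (a b : Fin n) :
    (lexGraph n m).Adj a b ↔ a ≠ b ∧
      (min a.val b.val < k ∨ (min a.val b.val = k ∧ max a.val b.val ≤ k + w)) := by
  constructor
  · rintro ⟨hne, hidx⟩
    have hv : a.val ≠ b.val := fun h => hne (Fin.val_injective h)
    refine ⟨hne, ?_⟩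
    rw [← lex_key hk1 hkw hm (min a.val b.val) (max a.val b.val) (by omega) (by
      have := a.isLt; have := b.isLt; omega)]
    exact hidx
  · rintro ⟨hne, hcond⟩
    have hv : a.val ≠ b.val := fun h => hne (Fin.val_injective h)
    refine ⟨hne, ?_⟩
    rw [lex_key hk1 hkw hm (min a.val b.val) (max a.val b.val) (by omega) (by
      have := a.isLt; have := b.isLt; omega)]
    exact hcond

end P2
section P3
open EllAux Finset
variable {n m k w : ℕ}

open Classical in
lemma card_indep (hk1 : 1 ≤ k) (hkw : k + w + 2 ≤ n) (G : SimpleGraph (Fin n))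
    (hadj : ∀ a b, G.Adj a b ↔ a ≠ b ∧
      (min a.val b.val < k ∨ (min a.val b.val = k ∧ max a.val b.val ≤ k + w))) :
    Nat.card {s : Finset (Fin n) // ∀ a ∈ s, ∀ b ∈ s, ¬ G.Adj a b}
      = 2^(n-k-1) + 2^(n-k-w-1) + k := by
  have hkn : k < n := by omega
  have hkwn : k + w < n := by omega
  set vk : Fin n := ⟨k, hkn⟩ with hvk
  set vkw : Fin n := ⟨k + w, hkwn⟩ with hvkw
  have hvkval : vk.val = k := rfl
  have hvkwval : vkw.val = k + w := rfl
  set F1 : Finset (Finset (Fin n)) := (Finset.Iio vk).image (fun a => ({a} : Finset (Fin n)))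
    with hF1
  set F2 : Finset (Finset (Fin n)) := (Finset.Ioi vk).powerset with hF2
  set F3 : Finset (Finset (Fin n)) := (Finset.Ioi vkw).powerset.image (insert vk) with hF3
  have hmemIoi : ∀ (x v : Fin n), x ∈ Finset.Ioi v ↔ v.val < x.val := by
    intro x v; rw [Finset.mem_Ioi]; exact Fin.lt_def
  have hunion : Finset.univ.filter
      (fun s : Finset (Fin n) => ∀ a ∈ s, ∀ b ∈ s, ¬ G.Adj a b) = (F1 ∪ F2) ∪ F3 := by
    ext S
    simp only [Finset.mem_filter, Finset.mem_univ, true_and, Finset.mem_union, hF1, hF2, hF3,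
      Finset.mem_image, Finset.mem_powerset, Finset.mem_Iio]
    constructor
    · intro hS
      by_cases hlow : ∃ a ∈ S, a.val < k
      · obtain ⟨a, haS, hak⟩ := hlow
        left; left
        refine ⟨a, Fin.lt_def.mpr (by exact hak), ?_⟩
        have : S = {a} := by
          ext b
          simp only [Finset.mem_singleton]
          constructor
          · intro hbS
            by_contra hba
            exact hS a haS b hbS ((hadj a b).mpr ⟨fun h => hba (h ▸ rfl),
              Or.inl (by omega)⟩)
          · rintro rfl; exact haS
        exact this.symm
      · push_neg at hlow
        by_cases hvkS : vk ∈ S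
        · right
          refine ⟨S.erase vk, ?_, Finset.insert_erase hvkS⟩
          intro b hb
          rw [hmemIoi]
          have hbS := Finset.mem_of_mem_erase hb
          have hbne : b ≠ vk := Finset.ne_of_mem_erase hb
          have hbk : k ≤ b.val := hlow b hbS
          have hbk' : k < b.val := by
            rcases Nat.eq_or_lt_of_le hbk with h | h
            · exact absurd (Fin.ext h.symm : b = vk) hbne
            · exact h
          by_contra hble
          push_neg at hble
          exact hS vk hvkS b hbS ((hadj vk b).mpr ⟨fun h => hbne h.symm,
            Or.inr ⟨by simp only [hvkval]; omega, by simp only [hvkval]; omega⟩⟩)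
        · left; right
          intro b hbS
          rw [hmemIoi]
          have hbk : k ≤ b.val := hlow b hbS
          rcases Nat.eq_or_lt_of_le hbk with h | h
          · exact absurd (Fin.ext h.symm : b = vk) (fun hb => hvkS (hb ▸ hbS))
          · exact h
    · rintro ((⟨a0, ha0, rfl⟩ | hsub) | ⟨T, hT, rfl⟩) <;> intro a ha b hb hAdj <;>
        rw [hadj] at hAdj <;> obtain ⟨hne, hcase⟩ := hAdj
      · simp only [Finset.mem_singleton] at ha hb
        exact hne (ha.trans hb.symm)
      · have h1 := (hmemIoi a vk).mp (hsub ha)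
        have h2 := (hmemIoi b vk).mp (hsub hb)
        simp only [hvk] at h1 h2
        omega
      · simp only [Finset.mem_insert] at ha hb
        have hTval : ∀ c : Fin n, c ∈ T → k + w < c.val := by
          intro c hc; exact (hmemIoi c vkw).mp (hT hc)
        rcases ha with rfl | haT <;> rcases hb with rfl | hbT
        · exact hne rfl
        · have := hTval b hbT; simp only [hvk] at hcase; omega
        · have := hTval a haT; simp only [hvk] at hcase; omega
        · have := hTval a haT; have := hTval b hbT; omega
  have hd12 : Disjoint F1 F2 := by
    rw [Finset.disjoint_left]
    rintro S hS1 hS2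
    rw [hF1, Finset.mem_image] at hS1
    obtain ⟨a, ha, rfl⟩ := hS1
    rw [hF2, Finset.mem_powerset] at hS2
    have := (hmemIoi a vk).mp (hS2 (Finset.mem_singleton_self a))
    rw [Finset.mem_Iio, Fin.lt_def] at ha
    omega
  have hd3 : Disjoint (F1 ∪ F2) F3 := by
    rw [Finset.disjoint_right]
    rintro S hS3 hS12
    rw [hF3, Finset.mem_image] at hS3
    obtain ⟨T, hT, rfl⟩ := hS3
    rw [Finset.mem_powerset] at hT
    have hvkmem : vk ∈ insert vk T := Finset.mem_insert_self _ _
    rcases Finset.mem_union.mp hS12 with h1 | h2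
    · rw [hF1, Finset.mem_image] at h1
      obtain ⟨a, ha, heq⟩ := h1
      rw [← heq] at hvkmem
      rw [Finset.mem_singleton] at hvkmem
      rw [Finset.mem_Iio, Fin.lt_def, hvkmem] at ha
      omega
    · rw [hF2, Finset.mem_powerset] at h2
      have := (hmemIoi vk vk).mp (h2 hvkmem)
      omega
  have hc1 : F1.card = k := by
    rw [hF1, Finset.card_image_of_injective _ Finset.singleton_injective, Fin.card_Iio]
  have hc2 : F2.card = 2^(n-k-1) := by
    rw [hF2, Finset.card_powerset, Fin.card_Ioi]
    congr 1
    simp only [hvkval]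
    omega
  have hc3 : F3.card = 2^(n-k-w-1) := by
    rw [hF3]
    rw [Finset.card_image_of_injOn ?_, Finset.card_powerset, Fin.card_Ioi]
    · congr 1
      simp only [hvkwval]
      omega
    · intro S hS Tt hTt heq
      rw [Finset.mem_coe, Finset.mem_powerset] at hS hTt
      have hvS : vk ∉ S := fun h => by
        have := (hmemIoi vk vkw).mp (hS h); simp only [hvkval, hvkwval] at this; omega
      have hvT : vk ∉ Tt := fun h => by
        have := (hmemIoi vk vkw).mp (hTt h); simp only [hvkval, hvkwval] at this; omega
      rw [← Finset.erase_insert hvS, ← Finset.erase_insert hvT, heq]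
  rw [Nat.card_eq_fintype_card, Fintype.card_subtype, hunion,
    Finset.card_union_of_disjoint hd3, Finset.card_union_of_disjoint hd12, hc1, hc2, hc3]
  ring

end P3
section P4
open EllAux Finset

lemma not_Jrel_one_one : ¬ Jrel 1 1 := by
  rintro (⟨_, h⟩ | ⟨h, _⟩ | ⟨h, _⟩) <;> simp at h
lemma Jrel_one_two : Jrel 1 2 := Or.inl ⟨rfl, rfl⟩
lemma Jrel_two_one : Jrel 2 1 := Or.inr (Or.inl ⟨rfl, rfl⟩)
lemma Jrel_two_two : Jrel 2 2 := Or.inr (Or.inr ⟨rfl, rfl⟩)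

/-- `Jrel x y` implies `x ≠ 0`. -/
lemma Jrel_ne_zero {x y : Fin 3} (h : Jrel x y) : x ≠ 0 := by
  rcases h with ⟨rfl, _⟩ | ⟨rfl, _⟩ | ⟨rfl, _⟩ <;> decide

open Classical in
/-- For a graph with no isolated vertices, `J`-homomorphisms biject with independent sets. -/
lemma homCount_eq_card_indep {V : Type*} [Fintype V] (G : SimpleGraph V)
    (hiso : ∀ v : V, ∃ u, G.Adj v u) :
    homCount G Jrel = Nat.card {s : Finset V // ∀ a ∈ s, ∀ b ∈ s, ¬ G.Adj a b} := by
  apply Nat.card_congr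
  refine ⟨fun f => ⟨Finset.univ.filter (fun v => f.1 v = 1), ?_⟩,
    fun s => ⟨fun v => if v ∈ s.1 then 1 else 2, ?_⟩, ?_, ?_⟩
  · intro a ha b hb hadj
    rw [Finset.mem_filter] at ha hb
    have := f.2 a b hadj
    rw [ha.2, hb.2] at this
    exact not_Jrel_one_one this
  · intro a b hadj
    dsimp only
    by_cases h1 : a ∈ s.1 <;> by_cases h2 : b ∈ s.1
    · exact absurd hadj (s.2 a h1 b h2)
    · rw [if_pos h1, if_neg h2]; exact Jrel_one_two
    · rw [if_neg h1, if_pos h2]; exact Jrel_two_one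
    · rw [if_neg h1, if_neg h2]; exact Jrel_two_two
  · intro f
    apply Subtype.ext
    funext v
    have h0 : f.1 v ≠ 0 := by
      obtain ⟨u, hu⟩ := hiso v
      exact Jrel_ne_zero (f.2 v u hu)
    by_cases h1 : f.1 v = 1
    · simp [h1]
    · have h2 : f.1 v = 2 := by omega
      simp [h1, h2]
  · intro s
    apply Subtype.ext
    ext v
    by_cases hv : v ∈ s.1 <;> simp [hv]
  
/-- Adding `r` isolated vertices multiplies the `J`-hom count by `3^r`. -/
lemma homCount_addIsolates {V : Type*} [Fintype V] (G : SimpleGraph V) (r : ℕ) :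
    homCount (addIsolates G r) Jrel = homCount G Jrel * 3 ^ r := by
  have e : {f : V ⊕ Fin r → Fin 3 // ∀ a b, (addIsolates G r).Adj a b → Jrel (f a) (f b)}
      ≃ {g : V → Fin 3 // ∀ a b, G.Adj a b → Jrel (g a) (g b)} × (Fin r → Fin 3) := by
    refine ⟨fun f => (⟨f.1 ∘ Sum.inl, fun a b hab => f.2 _ _ ⟨a, b, rfl, rfl, hab⟩⟩,
        f.1 ∘ Sum.inr),
      fun gh => ⟨Sum.elim gh.1.1 gh.2, ?_⟩, ?_, ?_⟩
    · rintro x y ⟨a, b, rfl, rfl, hab⟩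
      exact gh.1.2 a b hab
    · intro f
      apply Subtype.ext
      funext x
      cases x <;> rfl
    · intro gh
      refine Prod.ext (Subtype.ext ?_) rfl
      rfl
  rw [homCount, Nat.card_congr e, Nat.card_prod, homCount]
  congr 1
  rw [Nat.card_eq_fintype_card, Fintype.card_fun, Fintype.card_fin, Fintype.card_fin]

/-- hom counts transfer along relabelling of vertices. -/
lemma homCount_map {V W : Type*} (e : V ≃ W) (G : SimpleGraph V) :
    homCount (G.map e.toEmbedding) Jrel = homCount G Jrel := by
  apply Nat.card_congr
  refine ⟨fun f => ⟨f.1 ∘ e, fun a b hab => f.2 _ _ ?_⟩,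
    fun g => ⟨g.1 ∘ e.symm, ?_⟩, ?_, ?_⟩
  · exact ⟨e.injective.ne (G.ne_of_adj hab), a, b, hab, rfl, rfl⟩
  · rintro x y ⟨-, a, b, hab, rfl, rfl⟩
    simpa using g.2 a b hab
  · intro f
    apply Subtype.ext
    funext x
    simp
  · intro g
    apply Subtype.ext
    funext v
    simp

/-- edge counts transfer along relabelling of vertices. -/
lemma edgeCount_map {V W : Type*} (e : V ≃ W) (G : SimpleGraph V) :
    edgeCount (G.map e.toEmbedding) = edgeCount G :=
  (Nat.card_congr ((SimpleGraph.Iso.map e G).mapEdgeSet)).symm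

/-- adding isolated vertices keeps the edge count. -/
lemma edgeCount_addIsolates {V : Type*} (G : SimpleGraph V) (r : ℕ) :
    edgeCount (addIsolates G r) = edgeCount G := by
  symm
  apply Nat.card_congr
  apply Equiv.ofBijective (f := fun s : G.edgeSet =>
    (⟨Sym2.map Sum.inl s.1, by
      obtain ⟨s, hs⟩ := s
      induction s with
      | _ a b => exact ⟨a, b, rfl, rfl, hs⟩⟩ : (addIsolates G r).edgeSet))
  constructor
  · intro s t hst
    apply Subtype.ext
    have := congrArg Subtype.val hst
    simp only at this
    exact Sym2.map.injective Sum.inl_injective this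
  · rintro ⟨s, hs⟩
    induction s with
    | _ x y =>
      obtain ⟨a, b, hx, hy, hab⟩ := hs
      dsimp only at hx hy
      refine ⟨⟨s(a, b), hab⟩, Subtype.ext ?_⟩
      show Sym2.map Sum.inl s(a, b) = s(x, y)
      rw [hx, hy]
      rfl

end P4
section P5
open EllAux Finset

open Classical in
lemma edgeCount_lex {n m k w : ℕ} (hk1 : 1 ≤ k) (hkw : k + w + 2 ≤ n)
    (hm : m = EllAux.T n k + w) :
    edgeCount (lexGraph n m) = m := by classical
  have hchar := lex_adj_iff hk1 hkw hm (n := n) (m := m)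
  have hkn : k < n := by omega
  have hkwn : k + w < n := by omega
  set vk : Fin n := ⟨k, hkn⟩ with hvk
  set vkw : Fin n := ⟨k + w, hkwn⟩ with hvkw
  have hvkval : vk.val = k := rfl
  have hvkwval : vkw.val = k + w := rfl
  have hdeg : ∀ v : Fin n, (lexGraph n m).degree v =
      (if v.val < k then n - 1 else if v.val = k then k + w
        else if v.val ≤ k + w then k + 1 else k) := by
    intro v
    rw [← SimpleGraph.card_neighborFinset_eq_degree]
    by_cases h1 : v.val < k
    · rw [if_pos h1]
      have : (lexGraph n m).neighborFinset v = Finset.univ.erase v := by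
        ext b
        simp only [SimpleGraph.mem_neighborFinset, Finset.mem_erase, Finset.mem_univ,
          and_true]
        rw [hchar v b, ne_eq, ne_eq, Fin.ext_iff, Fin.ext_iff]
        constructor
        · rintro ⟨hne, _⟩
          exact fun hh => hne hh.symm
        · intro hne
          exact ⟨fun hh => hne hh.symm, Or.inl (by omega)⟩
      rw [this, Finset.card_erase_of_mem (Finset.mem_univ v), Finset.card_univ,
        Fintype.card_fin]
    · by_cases h2 : v.val = k
      · rw [if_neg h1, if_pos h2]
        have : (lexGraph n m).neighborFinset v = Finset.Iio vk ∪ Finset.Ioc vk vkw := by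
          ext b
          simp only [SimpleGraph.mem_neighborFinset]
          rw [Finset.mem_union, Finset.mem_Iio,
            Finset.mem_Ioc, hchar v b, Fin.lt_def, Fin.lt_def, Fin.le_def, ne_eq,
            Fin.ext_iff, hvkval, hvkwval]
          constructor
          · rintro ⟨hne, hc | ⟨hc1, hc2⟩⟩ <;> omega
          · intro hb
            refine ⟨by omega, ?_⟩
            rcases hb with hb | hb
            · exact Or.inl (by omega)
            · exact Or.inr ⟨by omega, by omega⟩
        rw [this, Finset.card_union_of_disjoint, Fin.card_Iio, Fin.card_Ioc, hvkval, hvkwval]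
        · omega
        · rw [Finset.disjoint_left]
          intro b hb1 hb2
          rw [Finset.mem_Iio, Fin.lt_def, hvkval] at hb1
          rw [Finset.mem_Ioc, Fin.lt_def, hvkval] at hb2
          omega
      · by_cases h3 : v.val ≤ k + w
        · rw [if_neg h1, if_neg h2, if_pos h3]
          have : (lexGraph n m).neighborFinset v = Finset.Iic vk := by
            ext b
            simp only [SimpleGraph.mem_neighborFinset]
            rw [Finset.mem_Iic, Fin.le_def, hchar v b,
              ne_eq, Fin.ext_iff, hvkval]
            constructor
            · rintro ⟨hne, hc | ⟨hc1, hc2⟩⟩ <;> omega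
            · intro hb
              rcases Nat.lt_or_ge b.val k with hh | hh
              · exact ⟨by omega, Or.inl (by omega)⟩
              · exact ⟨by omega, Or.inr ⟨by omega, by omega⟩⟩
          rw [this, Fin.card_Iic, hvkval]
        · rw [if_neg h1, if_neg h2, if_neg h3]
          have : (lexGraph n m).neighborFinset v = Finset.Iio vk := by
            ext b
            simp only [SimpleGraph.mem_neighborFinset]
            rw [Finset.mem_Iio, Fin.lt_def, hchar v b,
              ne_eq, Fin.ext_iff, hvkval]
            constructor
            · rintro ⟨hne, hc | ⟨hc1, hc2⟩⟩ <;> omega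
            · intro hb
              exact ⟨by omega, Or.inl (by omega)⟩
          rw [this, Fin.card_Iio, hvkval]
  have hsum : ∑ v : Fin n, (lexGraph n m).degree v = 2 * m := by
    rw [Finset.sum_congr rfl (fun v _ => hdeg v)]
    rw [Fin.sum_univ_eq_sum_range (fun i => if i < k then n - 1 else if i = k then k + w
      else if i ≤ k + w then k + 1 else k) n]
    rw [Finset.range_eq_Ico,
      ← Finset.sum_Ico_consecutive _ (Nat.zero_le k) (by omega : k ≤ n),
      ← Finset.sum_Ico_consecutive _ (by omega : k ≤ k + 1) (by omega : k + 1 ≤ n),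
      ← Finset.sum_Ico_consecutive _ (by omega : k + 1 ≤ k + w + 1) (by omega : k + w + 1 ≤ n)]
    have e1 : ∑ i ∈ Finset.Ico 0 k, (if i < k then n - 1 else if i = k then k + w
        else if i ≤ k + w then k + 1 else k) = k * (n - 1) := by
      rw [Finset.sum_const_nat (m := n - 1) (fun i hi => by
        rw [Finset.mem_Ico] at hi
        rw [if_pos (by omega)]), Nat.card_Ico, Nat.sub_zero]
    have e2 : ∑ i ∈ Finset.Ico k (k+1), (if i < k then n - 1 else if i = k then k + w
        else if i ≤ k + w then k + 1 else k) = k + w := by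
      rw [Finset.sum_const_nat (m := k + w) (fun i hi => by
        rw [Finset.mem_Ico] at hi
        rw [if_neg (by omega), if_pos (by omega)]), Nat.card_Ico]
      rw [show k + 1 - k = 1 by omega]
      ring
    have e3 : ∑ i ∈ Finset.Ico (k+1) (k+w+1), (if i < k then n - 1 else if i = k then k + w
        else if i ≤ k + w then k + 1 else k) = w * (k + 1) := by
      rw [Finset.sum_const_nat (m := k + 1) (fun i hi => by
        rw [Finset.mem_Ico] at hi
        rw [if_neg (by omega), if_neg (by omega), if_pos (by omega)]), Nat.card_Ico]
      rw [show k + w + 1 - (k + 1) = w by omega]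
    have e4 : ∑ i ∈ Finset.Ico (k+w+1) n, (if i < k then n - 1 else if i = k then k + w
        else if i ≤ k + w then k + 1 else k) = (n - (k+w+1)) * k := by
      rw [Finset.sum_const_nat (m := k) (fun i hi => by
        rw [Finset.mem_Ico] at hi
        rw [if_neg (by omega), if_neg (by omega), if_neg (by omega)]), Nat.card_Ico]
    rw [e1, e2, e3, e4, hm]
    -- arithmetic identity
    obtain ⟨c, hc⟩ : ∃ c, n = k + w + 2 + c := ⟨n - (k+w+2), by omega⟩
    subst hc
    have h2T := two_T (k+w+2+c) k (by omega)
    have r1 : k + w + 2 + c - 1 = k + w + 1 + c := by omega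
    have r2 : k + w + 2 + c - (k + w + 1) = 1 + c := by omega
    rw [r1, r2]
    zify
    zify at h2T
    linear_combination -h2T
  have hcard : 2 * (lexGraph n m).edgeFinset.card = 2 * m := by
    rw [← SimpleGraph.sum_degrees_eq_twice_card_edges, hsum]
  rw [edgeCount, Nat.card_eq_fintype_card, ← SimpleGraph.edgeFinset_card]
  omega

end P5
section P6
open EllAux Finset

lemma lex_no_isolated {n m k w : ℕ} (hk1 : 1 ≤ k) (hkw : k + w + 2 ≤ n)
    (hm : m = EllAux.T n k + w) (v : Fin n) : ∃ u, (lexGraph n m).Adj v u := by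
  by_cases h0 : v.val = 0
  · refine ⟨⟨1, by omega⟩, (lex_adj_iff hk1 hkw hm _ _).mpr
      ⟨fun h => by rw [Fin.ext_iff] at h; simp at h; omega, Or.inl (by simp; omega)⟩⟩
  · refine ⟨⟨0, by omega⟩, (lex_adj_iff hk1 hkw hm _ _).mpr
      ⟨fun h => by rw [Fin.ext_iff] at h; simp at h; omega, Or.inl (by simp; omega)⟩⟩

/-- hom count of lex graph plus isolated vertices. -/
lemma homCount_lex_isolates {n m k w : ℕ} (hk1 : 1 ≤ k) (hkw : k + w + 2 ≤ n)
    (hm : m = EllAux.T n k + w) (r : ℕ) :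
    homCount (addIsolates (lexGraph n m) r) Jrel
      = (2^(n-k-1) + 2^(n-k-w-1) + k) * 3 ^ r := by
  rw [homCount_addIsolates, homCount_eq_card_indep _ (lex_no_isolated hk1 hkw hm),
    card_indep hk1 hkw _ (lex_adj_iff hk1 hkw hm)]

lemma ineq1 (a w k Y : ℕ) (ha : 3 ≤ a) (hk : 1 ≤ k) :
    2^(a-1) + 2^(a-w-1) + k < 9 * (2^(a-3) + Y + k) := by
  have h1 : 2^(a-1) = 4 * 2^(a-3) := by
    rw [show a-1 = (a-3)+2 by omega, pow_add]
    ring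
  have h2 : 2^(a-w-1) ≤ 2^(a-1) := Nat.pow_le_pow_right (by omega) (by omega)
  have h3 : 1 ≤ 2^(a-3) := Nat.one_le_two_pow
  omega

lemma ineq2 (a w k Y : ℕ) (ha : 4 ≤ a) (hw : 3 ≤ w) :
    2^(a-1) + 2^(a-w-1) + k < 9 * (2^(a-4) + Y + (k + 1)) := by
  have h1 : 2^(a-1) = 8 * 2^(a-4) := by
    rw [show a-1 = (a-4)+3 by omega, pow_add]
    ring
  have h2 : 2^(a-w-1) ≤ 2^(a-4) := Nat.pow_le_pow_right (by omega) (by omega)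
  omega

end P6
/-- Upper bound on `ℓ(m)`: if `q` is the number of vertices of the lex component
of a `J`-extremal graph on `m+1` vertices and `m` edges, then
`q ≤ (5 + √(9+24m))/2`. -/
theorem ell_upper_bound (m q : ℕ) (hm : 1 ≤ m) (hq : q ≤ m + 1)
    (hq2 : m ≤ q.choose 2)
    (hmax : ∀ G : SimpleGraph (Fin (m + 1)), edgeCount G = m →
      homCount G Jrel ≤ homCount (addIsolates (lexGraph q m) (m + 1 - q)) Jrel) :
    (q : ℝ) ≤ (5 + Real.sqrt (9 + 24 * m)) / 2 := by
  classical
  by_contra hcon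
  push_neg at hcon
  have hsqnn : (0:ℝ) ≤ Real.sqrt (9 + 24 * m) := Real.sqrt_nonneg _
  have hq3 : 3 ≤ q := by
    have h2 : (2:ℝ) < (q:ℝ) := by nlinarith
    exact_mod_cast Nat.succ_le_of_lt (by exact_mod_cast h2 : (2:ℕ) < q)
  have hpos : (0:ℝ) < 2 * (q:ℝ) - 5 := by
    have : (5:ℝ)/2 < q := by nlinarith
    by_contra hh
    push_neg at hh
    nlinarith
  have hsq : Real.sqrt (9 + 24 * m) < 2 * (q:ℝ) - 5 := by linarith
  have hlt : (9:ℝ) + 24 * m < (2 * (q:ℝ) - 5)^2 := (Real.sqrt_lt' hpos).mp hsq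
  have hZ : (9:ℤ) + 24 * m < (2 * (q:ℤ) - 5)^2 := by exact_mod_cast hlt
  have hQZ : 5 * (q:ℤ) + 6 * m < q * q + 4 := by nlinarith
  have hQn : 5 * q + 6 * m < q * q + 4 := by exact_mod_cast hQZ
  have hq11 : 11 ≤ q := by
    by_contra hh
    push_neg at hh
    interval_cases q <;> omega
  -- the (k, w) decomposition of (q, m)
  have hP1 : EllAux.T q 1 ≤ m := by
    rw [show (1:ℕ) = 0 + 1 from rfl, EllAux.T_succ]
    rw [EllAux.T_zero]
    omega
  set k := Nat.findGreatest (fun j => EllAux.T q j ≤ m) q with hkdef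
  have hk1 : 1 ≤ k := Nat.le_findGreatest (by omega) hP1
  have hkq : k ≤ q := Nat.findGreatest_le q
  have hTk : EllAux.T q k ≤ m :=
    Nat.findGreatest_spec (P := fun j => EllAux.T q j ≤ m) (by omega : 1 ≤ q) hP1
  have h2Tk : 2 * EllAux.T q k + k * k + k = 2 * (k * q) := EllAux.two_T q k hkq
  have hq3k : 3 * k + 6 ≤ q := by
    by_contra hcon2
    push_neg at hcon2
    have hTk' : (EllAux.T q k : ℤ) ≤ m := by exact_mod_cast hTk
    have h2Tk' : 2 * (EllAux.T q k : ℤ) + k * k + k = 2 * (k * q) := by exact_mod_cast h2Tk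
    have hk1' : (1:ℤ) ≤ k := by exact_mod_cast hk1
    have hq11' : (11:ℤ) ≤ q := by exact_mod_cast hq11
    have hkq' : (k:ℤ) ≤ q := by exact_mod_cast hkq
    have hcon2' : (q:ℤ) ≤ 3 * k + 5 := by exact_mod_cast (by omega : q ≤ 3 * k + 5)
    nlinarith [mul_nonneg (by linarith : (0:ℤ) ≤ (q:ℤ) - k)
        (by linarith : (0:ℤ) ≤ 3 * (k:ℤ) + 5 - q),
      mul_nonneg (by linarith : (0:ℤ) ≤ (k:ℤ) - 1) (by linarith : (0:ℤ) ≤ (q:ℤ) - 11)]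
  have hnotP : ¬ (EllAux.T q (k+1) ≤ m) :=
    Nat.findGreatest_is_greatest (P := fun j => EllAux.T q j ≤ m)
      (Nat.lt_succ_self k) (by omega)
  have hsucc : EllAux.T q (k+1) = EllAux.T q k + (q - 1 - k) := EllAux.T_succ q k
  set w := m - EllAux.T q k with hwdef
  have hmw : m = EllAux.T q k + w := by omega
  have hkw : k + w + 2 ≤ q := by omega
  have hright := homCount_lex_isolates hk1 hkw hmw (m + 1 - q)
  have hshift : EllAux.T q k = EllAux.T (q-2) k + 2 * k := by
    have h := EllAux.T_shift (q-2) k (by omega)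
    rw [show q - 2 + 2 = q from by omega] at h
    omega
  have hsucc2 : EllAux.T (q-2) (k+1) = EllAux.T (q-2) k + (q - 2 - 1 - k) :=
    EllAux.T_succ (q-2) k
  set c2 := m + 1 - (q - 2) with hc2def
  have hc2 : c2 = (m + 1 - q) + 2 := by omega
  have e : Fin (q-2) ⊕ Fin c2 ≃ Fin (m+1) :=
    finSumFinEquiv.trans (finCongr (by omega))
  set Gbig := (addIsolates (lexGraph (q-2) m) c2).map e.toEmbedding with hGbig
  rcases le_or_gt (w + 3*k + 4) q with h1 | h1
  · -- case 1 : two vertices removed, same k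
    have hm2 : m = EllAux.T (q-2) k + (w + 2*k) := by omega
    have hkw2 : k + (w + 2*k) + 2 ≤ q - 2 := by omega
    have hedge : edgeCount Gbig = m := by
      rw [hGbig, edgeCount_map, edgeCount_addIsolates, edgeCount_lex hk1 hkw2 hm2]
    have hhom : homCount Gbig Jrel
        = (2^(q-2-k-1) + 2^(q-2-k-(w+2*k)-1) + k) * 3 ^ c2 := by
      rw [hGbig, homCount_map, homCount_lex_isolates hk1 hkw2 hm2]
    have hle := hmax Gbig hedge
    rw [hhom, hright, hc2, pow_add] at hle
    have hle2 : (2^(q-2-k-1) + 2^(q-2-k-(w+2*k)-1) + k) * 9 * 3^(m+1-q)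
        ≤ (2^(q-k-1) + 2^(q-k-w-1) + k) * 3^(m+1-q) := by
      calc (2^(q-2-k-1) + 2^(q-2-k-(w+2*k)-1) + k) * 9 * 3^(m+1-q)
          = (2^(q-2-k-1) + 2^(q-2-k-(w+2*k)-1) + k) * (3^(m+1-q) * 3^2) := by ring
        _ ≤ _ := hle
    have h9 := Nat.le_of_mul_le_mul_right hle2 (by positivity)
    have hA := ineq1 (q-k) w k (2^(q-2-k-(w+2*k)-1)) (by omega) hk1
    rw [show q - k - 3 = q - 2 - k - 1 from by omega] at hA
    omega
  · -- case 2 : two vertices removed, k increases by 1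
    have hw3 : 3 ≤ w := by omega
    have hm2 : m = EllAux.T (q-2) (k+1) + (w + 3*k + 3 - q) := by omega
    have hkw2 : (k+1) + (w + 3*k + 3 - q) + 2 ≤ q - 2 := by omega
    have hedge : edgeCount Gbig = m := by
      rw [hGbig, edgeCount_map, edgeCount_addIsolates, edgeCount_lex (by omega) hkw2 hm2]
    have hhom : homCount Gbig Jrel
        = (2^(q-2-(k+1)-1) + 2^(q-2-(k+1)-(w+3*k+3-q)-1) + (k+1)) * 3 ^ c2 := by
      rw [hGbig, homCount_map, homCount_lex_isolates (by omega) hkw2 hm2]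
    have hle := hmax Gbig hedge
    rw [hhom, hright, hc2, pow_add] at hle
    have hle2 : (2^(q-2-(k+1)-1) + 2^(q-2-(k+1)-(w+3*k+3-q)-1) + (k+1)) * 9 * 3^(m+1-q)
        ≤ (2^(q-k-1) + 2^(q-k-w-1) + k) * 3^(m+1-q) := by
      calc (2^(q-2-(k+1)-1) + 2^(q-2-(k+1)-(w+3*k+3-q)-1) + (k+1)) * 9 * 3^(m+1-q)
          = (2^(q-2-(k+1)-1) + 2^(q-2-(k+1)-(w+3*k+3-q)-1) + (k+1)) * (3^(m+1-q) * 3^2) := by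
            ring
        _ ≤ _ := hle
    have h9 := Nat.le_of_mul_le_mul_right hle2 (by positivity)
    have hA := ineq2 (q-k) w k (2^(q-2-(k+1)-(w+3*k+3-q)-1)) (by omega) hw3
    rw [show q - k - 4 = q - 2 - (k+1) - 1 from by omega] at hA
    omega
end
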